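/- Let h : ℝ → ℝ be measurable and nonnegative, let t ∈ ℝ and τ > 0. Then ∫_{t−τ}^{t} (t−s)^{−2/3}·h(s)^{1/3} ds ≤ 4^{8/9}·τ^{2/9}·( ∫_{t−τ}^{t} h(s)³ ds )^{1/9}. -/

import Mathlib

open MeasureTheory

/-- Hölder-in-time estimate: for measurable `h ≥ 0`, `τ > 0` and `t ∈ ℝ`,
`∫_{t-τ}^{t} (t-s)^{-2/3} h(s)^{1/3} ds ≤ 4^{8/9} τ^{2/9} (∫_{t-τ}^{t} h(s)³ ds)^{1/9}`. -/
theorem holder_in_time_estimate (h : ℝ → ℝ) (hmeas : Measurable h)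
    (h0 : ∀ s, 0 ≤ h s) (t τ : ℝ) (hτ : 0 < τ) :
    (∫⁻ s in Set.Ioc (t - τ) t,
        ENNReal.ofReal ((t - s) ^ (-(2 : ℝ) / 3) * h s ^ ((1 : ℝ) / 3))) ≤
      ENNReal.ofReal ((4 : ℝ) ^ ((8 : ℝ) / 9) * τ ^ ((2 : ℝ) / 9)) *
        (∫⁻ s in Set.Ioc (t - τ) t, ENNReal.ofReal (h s ^ 3)) ^ ((1 : ℝ) / 9) := by
  set A : Set ℝ := Set.Ioc (t - τ) t with hA
  set f : ℝ → ENNReal := fun s => ENNReal.ofReal ((t - s) ^ (-(2 : ℝ) / 3)) with hf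
  set g : ℝ → ENNReal := fun s => ENNReal.ofReal (h s ^ ((1 : ℝ) / 3)) with hg
  have hfm : Measurable f :=
    ENNReal.measurable_ofReal.comp ((measurable_const.sub measurable_id).pow_const _)
  have hgm : Measurable g :=
    ENNReal.measurable_ofReal.comp (hmeas.pow_const _)
  have hpq : Real.HolderConjugate (9/8) 9 := ⟨by norm_num, by norm_num, by norm_num⟩
  have hstep1 : (∫⁻ s in A,
      ENNReal.ofReal ((t - s) ^ (-(2 : ℝ) / 3) * h s ^ ((1 : ℝ) / 3)))
      = ∫⁻ s in A, f s * g s := by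
    refine setLIntegral_congr_fun measurableSet_Ioc ?_
    intro s hs
    have hts : 0 ≤ t - s := by
      have := hs.2; linarith
    beta_reduce
    rw [ENNReal.ofReal_mul (Real.rpow_nonneg hts _)]
  rw [hstep1]
  -- value of the f-integral
  have hreal : (∫ s in A, (t - s) ^ (-(3 : ℝ) / 4)) = 4 * τ ^ ((1:ℝ)/4) := by
    have h1 : (∫ s in A, (t - s) ^ (-(3 : ℝ) / 4))
        = ∫ s in (t - τ)..t, (t - s) ^ (-(3 : ℝ) / 4) := by
      rw [intervalIntegral.integral_of_le (by linarith)]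
    rw [h1, intervalIntegral.integral_comp_sub_left (fun x : ℝ => x ^ (-(3:ℝ)/4)) t]
    simp only [sub_self, sub_sub_cancel]
    rw [integral_rpow (Or.inl (by norm_num))]
    rw [Real.zero_rpow (by norm_num)]
    norm_num
    ring
  have hint : IntegrableOn (fun s => (t - s) ^ (-(3 : ℝ) / 4)) A := by
    have h1 : IntervalIntegrable (fun x : ℝ => x ^ (-(3:ℝ)/4)) volume 0 τ :=
      intervalIntegral.intervalIntegrable_rpow' (by norm_num)
    have h2 := h1.comp_sub_left t
    have h3 : IntervalIntegrable (fun s => (t - s) ^ (-(3 : ℝ) / 4))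
        volume (t - τ) t := by simpa using h2.symm
    exact (intervalIntegrable_iff_integrableOn_Ioc_of_le (by linarith)).mp h3
  have hI : (∫⁻ s in A, f s ^ (9/8 : ℝ))
      = ENNReal.ofReal (4 * τ ^ ((1:ℝ)/4)) := by
    have heq : (∫⁻ s in A, f s ^ (9/8 : ℝ))
        = ∫⁻ s in A, ENNReal.ofReal ((t - s) ^ (-(3 : ℝ) / 4)) := by
      refine setLIntegral_congr_fun measurableSet_Ioc ?_
      intro s hs
      have hts : 0 ≤ t - s := by have := hs.2; linarith
      show (ENNReal.ofReal ((t - s) ^ (-(2:ℝ)/3))) ^ (9/8 : ℝ) = _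
      rw [ENNReal.ofReal_rpow_of_nonneg (Real.rpow_nonneg hts _)
        (by norm_num : (0:ℝ) ≤ 9/8), ← Real.rpow_mul hts]
      norm_num
    have hnn : 0 ≤ᵐ[volume.restrict A] fun s => (t - s) ^ (-(3 : ℝ) / 4) := by
      refine (ae_restrict_iff' measurableSet_Ioc).mpr (Filter.Eventually.of_forall ?_)
      intro s hs
      exact Real.rpow_nonneg (by have := hs.2; linarith) _
    rw [heq, ← MeasureTheory.ofReal_integral_eq_lintegral_ofReal hint hnn, hreal]
  have hJ : (∫⁻ s in A, g s ^ (9 : ℝ)) = ∫⁻ s in A, ENNReal.ofReal (h s ^ 3) := by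
    refine setLIntegral_congr_fun measurableSet_Ioc ?_
    intro s _
    show (ENNReal.ofReal (h s ^ ((1:ℝ)/3))) ^ (9 : ℝ) = _
    rw [ENNReal.ofReal_rpow_of_nonneg (Real.rpow_nonneg (h0 s) _)
      (by norm_num : (0:ℝ) ≤ 9), ← Real.rpow_mul (h0 s)]
    norm_num
  calc ∫⁻ s in A, f s * g s
      ≤ (∫⁻ s in A, f s ^ (9/8 : ℝ)) ^ (1 / (9/8 : ℝ)) *
        (∫⁻ s in A, g s ^ (9 : ℝ)) ^ (1 / (9 : ℝ)) :=
        ENNReal.lintegral_mul_le_Lp_mul_Lq _ hpq hfm.aemeasurable hgm.aemeasurable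
    _ = ENNReal.ofReal ((4 : ℝ) ^ ((8 : ℝ) / 9) * τ ^ ((2 : ℝ) / 9)) *
        (∫⁻ s in A, ENNReal.ofReal (h s ^ 3)) ^ ((1 : ℝ) / 9) := by
        rw [hI, hJ]
        norm_num
        congr 1
        rw [← ENNReal.ofReal_ofNat 4, ← ENNReal.ofReal_mul (by norm_num)]
        rw [ENNReal.ofReal_rpow_of_nonneg (by positivity)
            (by norm_num : (0:ℝ) ≤ 8/9)]
        congr 1
        rw [Real.mul_rpow (by norm_num) (Real.rpow_nonneg hτ.le _),
          ← Real.rpow_mul hτ.le]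
        norm_num
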